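/- Let G₁, G₂ be profinite groups and H a maximal closed subgroup of G₁ × G₂ that surjects onto both factors. If G₁ and G₂ have no isomorphic finite nonabelian simple quotients in common (i.e. Quo(G₁) ∩ Quo(G₂) = ∅), then H contains the closed commutator subgroup (G₁ × G₂)'. -/

import Mathlib

set_option linter.unusedSectionVars false

/-- A maximal closed subgroup: a proper closed subgroup not properly contained in
any other proper closed subgroup. -/
def IsMaximalClosedSubgroup {G : Type*} [Group G] [TopologicalSpace G]
    (M : Subgroup G) : Prop :=
  IsClosed (M : Set G) ∧ M ≠ ⊤ ∧
    ∀ K : Subgroup G, IsClosed (K : Set G) → K ≠ ⊤ → M ≤ K → K = M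

open Pointwise

namespace ClosedCommAux

variable {G₁ G₂ : Type*} [Group G₁] [TopologicalSpace G₁] [IsTopologicalGroup G₁]
    [CompactSpace G₁] [T2Space G₁] [TotallyDisconnectedSpace G₁]
    [Group G₂] [TopologicalSpace G₂] [IsTopologicalGroup G₂]
    [CompactSpace G₂] [T2Space G₂] [TotallyDisconnectedSpace G₂]
    (H : Subgroup (G₁ × G₂))

lemma mem_N_iff {a : G₁} : a ∈ H.comap (MonoidHom.inl G₁ G₂) ↔ ((a, 1) : G₁ × G₂) ∈ H :=
  Iff.rfl

lemma fst_surj (h₁ : Subgroup.map (MonoidHom.fst G₁ G₂) H = ⊤) (a : G₁) :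
    ∃ b : G₂, ((a, b) : G₁ × G₂) ∈ H := by
  have : a ∈ Subgroup.map (MonoidHom.fst G₁ G₂) H := by rw [h₁]; trivial
  obtain ⟨x, hx, hxa⟩ := this
  exact ⟨x.2, by rw [show ((a, x.2) : G₁ × G₂) = x by ext <;> simp [← hxa]]; exact hx⟩

lemma snd_surj (h₂ : Subgroup.map (MonoidHom.snd G₁ G₂) H = ⊤) (b : G₂) :
    ∃ a : G₁, ((a, b) : G₁ × G₂) ∈ H := by
  have : b ∈ Subgroup.map (MonoidHom.snd G₁ G₂) H := by rw [h₂]; trivial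
  obtain ⟨x, hx, hxb⟩ := this
  exact ⟨x.1, by rw [show ((x.1, b) : G₁ × G₂) = x by ext <;> simp [← hxb]]; exact hx⟩

lemma N_closed (hH : IsClosed (H : Set (G₁ × G₂))) :
    IsClosed ((H.comap (MonoidHom.inl G₁ G₂) : Subgroup G₁) : Set G₁) := by
  rw [Subgroup.coe_comap]
  exact hH.preimage (show Continuous fun a : G₁ => ((a, 1) : G₁ × G₂) from
    continuous_id.prodMk continuous_const)

lemma N_normal (h₁ : Subgroup.map (MonoidHom.fst G₁ G₂) H = ⊤) :
    (H.comap (MonoidHom.inl G₁ G₂)).Normal := by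
  constructor
  intro n hn g
  rw [mem_N_iff] at hn ⊢
  obtain ⟨b, hgb⟩ := fst_surj H h₁ g
  have hmem : ((g, b) * (n, 1) * ((g, b))⁻¹ : G₁ × G₂) ∈ H :=
    H.mul_mem (H.mul_mem hgb hn) (H.inv_mem hgb)
  have heq : ((g, b) * (n, 1) * ((g, b))⁻¹ : G₁ × G₂) = (g * n * g⁻¹, 1) := by
    ext <;> simp
  rwa [heq] at hmem

lemma N_ne_top (hmax : IsMaximalClosedSubgroup H)
    (h₂ : Subgroup.map (MonoidHom.snd G₁ G₂) H = ⊤) :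
    H.comap (MonoidHom.inl G₁ G₂) ≠ ⊤ := by
  intro htop
  apply hmax.2.1
  rw [Subgroup.eq_top_iff']
  rintro ⟨a, b⟩
  obtain ⟨a', ha'⟩ := snd_surj H h₂ b
  have h1 : ((a * a'⁻¹, 1) : G₁ × G₂) ∈ H := by
    have : a * a'⁻¹ ∈ H.comap (MonoidHom.inl G₁ G₂) := by rw [htop]; trivial
    exact (mem_N_iff H).mp this
  have hm := H.mul_mem h1 ha'
  have heq : ((a * a'⁻¹, 1) * (a', b) : G₁ × G₂) = (a, b) := by
    ext <;> simp
  rwa [heq] at hm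

lemma core_max (hmax : IsMaximalClosedSubgroup H)
    (M : Subgroup G₁) (hMn : M.Normal) (hMc : IsClosed (M : Set G₁))
    (hNM : H.comap (MonoidHom.inl G₁ G₂) ≤ M) (hMt : M ≠ ⊤) :
    M = H.comap (MonoidHom.inl G₁ G₂) := by
  haveI := hMn
  set P : Subgroup (G₁ × G₂) := M.prod ⊥ with hPdef
  have hKset : ((H ⊔ P : Subgroup _) : Set (G₁ × G₂)) = (H : Set (G₁ × G₂)) * (P : Set (G₁ × G₂)) :=
    Subgroup.mul_normal H P
  have hPc : IsClosed (P : Set (G₁ × G₂)) := by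
    rw [hPdef, Subgroup.coe_prod]
    exact hMc.prod (by rw [Subgroup.coe_bot]; exact isClosed_singleton)
  have hKc : IsClosed ((H ⊔ P : Subgroup (G₁ × G₂)) : Set (G₁ × G₂)) := by
    rw [hKset]
    exact ((hmax.1.isCompact).mul (hPc.isCompact)).isClosed
  have hKt : (H ⊔ P) ≠ ⊤ := by
    obtain ⟨g, hg⟩ : ∃ g : G₁, g ∉ M := by
      by_contra h
      push_neg at h
      exact hMt ((Subgroup.eq_top_iff' M).mpr h)
    intro htop
    apply hg
    have hgmem : ((g, 1) : G₁ × G₂) ∈ (H ⊔ P) := by rw [htop]; trivial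
    rw [← SetLike.mem_coe, hKset] at hgmem
    obtain ⟨x, hx, y, hy, hxy⟩ := hgmem
    have hy2 : y.2 = 1 := hy.2
    have hx2 : x.2 = 1 := by
      have h2 := congrArg Prod.snd hxy
      simpa [hy2] using h2
    have hx1 : x.1 ∈ M := hNM (by
      rw [mem_N_iff]
      rw [show ((x.1, (1 : G₂)) : G₁ × G₂) = x by ext <;> simp [hx2]]
      exact hx)
    have hgx : g = x.1 * y.1 := by
      have h1 := congrArg Prod.fst hxy
      exact h1.symm
    rw [hgx]
    exact M.mul_mem hx1 hy.1
  have hKH := hmax.2.2 _ hKc hKt le_sup_left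
  have hPH : P ≤ H := hKH ▸ le_sup_right
  refine le_antisymm (fun m hm => ?_) hNM
  exact (mem_N_iff H).mpr (hPH (Subgroup.mem_prod.mpr ⟨hm, Subgroup.mem_bot.mpr rfl⟩))

lemma N_open (hmax : IsMaximalClosedSubgroup H)
    (h₁ : Subgroup.map (MonoidHom.fst G₁ G₂) H = ⊤)
    (h₂ : Subgroup.map (MonoidHom.snd G₁ G₂) H = ⊤) :
    IsOpen ((H.comap (MonoidHom.inl G₁ G₂)) : Set G₁) := by
  set N := H.comap (MonoidHom.inl G₁ G₂) with hNdef
  haveI := N_normal H h₁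
  have hNc := N_closed H hmax.1
  have hNt := N_ne_top H hmax h₂
  obtain ⟨g, hg⟩ : ∃ g : G₁, g ∉ N := by
    by_contra h
    push_neg at h
    exact hNt ((Subgroup.eq_top_iff' N).mpr h)
  have hU : IsOpen ((fun x => g * x) ⁻¹' (↑N)ᶜ) :=
    (hNc.isOpen_compl).preimage (continuous_mul_left g)
  have h1U : (1 : G₁) ∈ (fun x => g * x) ⁻¹' (↑N)ᶜ := by simpa using hg
  obtain ⟨W, hWclopen, hW1, hWsub⟩ := compact_exists_isClopen_in_isOpen hU h1U
  obtain ⟨V, hV⟩ :=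
    IsTopologicalGroup.exist_openNormalSubgroup_sub_clopen_nhds_of_one hWclopen hW1
  have hMt : N ⊔ V.toSubgroup ≠ ⊤ := by
    intro htop
    have hgmem : g ∈ N ⊔ V.toSubgroup := by rw [htop]; trivial
    rw [← SetLike.mem_coe, Subgroup.normal_mul] at hgmem
    obtain ⟨n, hn, v, hv', hnv⟩ := hgmem
    have : g * v⁻¹ ∉ (N : Set G₁) := hWsub (hV (V.toSubgroup.inv_mem hv'))
    apply this
    have : g * v⁻¹ = n := by rw [← hnv]; group
    rw [this]
    exact hn
  have hMopen : IsOpen ((N ⊔ V.toSubgroup : Subgroup G₁) : Set G₁) :=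
    Subgroup.isOpen_mono (le_sup_right : V.toSubgroup ≤ _) V.isOpen
  have hMeq := core_max H hmax (N ⊔ V.toSubgroup) inferInstance
    (Subgroup.isClosed_of_isOpen _ hMopen) le_sup_left hMt
  rw [hNdef, ← hMeq]
  exact hMopen

end ClosedCommAux

lemma quot_discrete {G : Type*} [Group G] [TopologicalSpace G] [IsTopologicalGroup G]
    (N : Subgroup G) [N.Normal] (hN : IsOpen (N : Set G)) : DiscreteTopology (G ⧸ N) := by
  refine discreteTopology_iff_isOpen_singleton.mpr (fun q => ?_)
  obtain ⟨g, rfl⟩ := QuotientGroup.mk'_surjective N q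
  have heq : ({QuotientGroup.mk' N g} : Set (G ⧸ N))
      = QuotientGroup.mk '' ((fun x => g * x) '' ↑N) := by
    ext q'
    simp only [Set.mem_image, Set.mem_singleton_iff]
    constructor
    · rintro rfl
      exact ⟨g * 1, ⟨1, N.one_mem, rfl⟩, by simp⟩
    · rintro ⟨x, ⟨n, hn, rfl⟩, rfl⟩
      exact (QuotientGroup.mk_mul_of_mem g hn)
  rw [heq]
  exact QuotientGroup.isOpenMap_coe _ (((Homeomorph.mulLeft g).isOpenMap) _ hN)


open ClosedCommAux commutatorElement in
theorem aux_commutator_le {G₁ G₂ : Type*} [Group G₁] [TopologicalSpace G₁] [IsTopologicalGroup G₁]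
    [CompactSpace G₁] [T2Space G₁] [TotallyDisconnectedSpace G₁]
    [Group G₂] [TopologicalSpace G₂] [IsTopologicalGroup G₂]
    [CompactSpace G₂] [T2Space G₂] [TotallyDisconnectedSpace G₂]
    (H : Subgroup (G₁ × G₂)) (hmax : IsMaximalClosedSubgroup H)
    (h₁ : Subgroup.map (MonoidHom.fst G₁ G₂) H = ⊤)
    (h₂ : Subgroup.map (MonoidHom.snd G₁ G₂) H = ⊤)
    (hN₂open : IsOpen ((H.comap (MonoidHom.inr G₁ G₂)) : Set G₂))
    (hdisj : ∀ (S : Type) [Group S] [Finite S] [TopologicalSpace S] [DiscreteTopology S],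
      IsSimpleGroup S → (¬ ∀ a b : S, a * b = b * a) →
      ¬ ((∃ f : G₁ →* S, Continuous f ∧ Function.Surjective f) ∧
         (∃ f : G₂ →* S, Continuous f ∧ Function.Surjective f))) :
    commutator G₁ ≤ H.comap (MonoidHom.inl G₁ G₂) := by
  classical
  set N := H.comap (MonoidHom.inl G₁ G₂) with hNdef
  haveI hNn : N.Normal := N_normal H h₁
  have hNo : IsOpen (N : Set G₁) := N_open H hmax h₁ h₂
  have hNt : N ≠ ⊤ := N_ne_top H hmax h₂
  haveI : DiscreteTopology (G₁ ⧸ N) := quot_discrete N hNo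
  haveI : Finite (G₁ ⧸ N) := N.quotient_finite_of_isOpen hNo
  haveI : Nontrivial (G₁ ⧸ N) := by
    obtain ⟨g, hg⟩ : ∃ g : G₁, g ∉ N := by
      by_contra h
      push_neg at h
      exact hNt ((Subgroup.eq_top_iff' N).mpr h)
    exact ⟨⟨(g : G₁ ⧸ N), 1, by simpa [QuotientGroup.eq_one_iff] using hg⟩⟩
  haveI hsimpleQ : IsSimpleGroup (G₁ ⧸ N) := by
    constructor
    intro M' hM'
    have hNM : N ≤ Subgroup.comap (QuotientGroup.mk' N) M' := by
      intro x hx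
      rw [Subgroup.mem_comap]
      have hx1 : (QuotientGroup.mk' N) x = 1 := (QuotientGroup.eq_one_iff x).mpr hx
      rw [hx1]
      exact M'.one_mem
    have hMn : (Subgroup.comap (QuotientGroup.mk' N) M').Normal := hM'.comap _
    have hMo : IsOpen ((Subgroup.comap (QuotientGroup.mk' N) M') : Set G₁) :=
      Subgroup.isOpen_mono hNM hNo
    rcases eq_or_ne (Subgroup.comap (QuotientGroup.mk' N) M') ⊤ with htop | hne
    · right
      have : Subgroup.comap (QuotientGroup.mk' N) M'
          = Subgroup.comap (QuotientGroup.mk' N) ⊤ := by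
        rw [htop, Subgroup.comap_top]
      exact Subgroup.comap_injective (QuotientGroup.mk'_surjective N) this
    · left
      have hMN := core_max H hmax _ hMn (Subgroup.isClosed_of_isOpen _ hMo) hNM hne
      have : Subgroup.comap (QuotientGroup.mk' N) M'
          = Subgroup.comap (QuotientGroup.mk' N) ⊥ := by
        rw [hMN, MonoidHom.comap_bot, QuotientGroup.ker_mk']
      exact Subgroup.comap_injective (QuotientGroup.mk'_surjective N) this
  let S := Shrink.{0} (G₁ ⧸ N)
  let e : S ≃* (G₁ ⧸ N) := Shrink.mulEquiv
  haveI : Finite S := Finite.of_equiv (G₁ ⧸ N) (equivShrink.{0} (G₁ ⧸ N))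
  haveI : Nontrivial S := e.toEquiv.nontrivial
  haveI hSimpS : IsSimpleGroup S :=
    IsSimpleGroup.isSimpleGroup_of_surjective e.symm.toMonoidHom e.symm.surjective
  letI : TopologicalSpace S := ⊥
  haveI : DiscreteTopology S := ⟨rfl⟩
  let f₁ : G₁ →* S := e.symm.toMonoidHom.comp (QuotientGroup.mk' N)
  have hf₁c : Continuous f₁ := by
    have h : Continuous ((e.symm : (G₁ ⧸ N) → S) ∘ (QuotientGroup.mk' N)) :=
      Continuous.comp continuous_of_discreteTopology QuotientGroup.continuous_mk
    exact h
  have hf₁s : Function.Surjective f₁ :=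
    e.symm.surjective.comp (QuotientGroup.mk'_surjective N)
  let f : ↥H →* G₂ := (MonoidHom.snd G₁ G₂).comp H.subtype
  have hfs : Function.Surjective f := by
    intro b
    obtain ⟨a, hab⟩ := snd_surj H h₂ b
    exact ⟨⟨(a, b), hab⟩, rfl⟩
  let g : ↥H →* (G₁ ⧸ N) :=
    (QuotientGroup.mk' N).comp ((MonoidHom.fst G₁ G₂).comp H.subtype)
  have hker : f.ker ≤ g.ker := by
    intro x hx
    have hx2 : ((x : G₁ × G₂)).2 = 1 := hx
    have hx1 : ((x : G₁ × G₂)).1 ∈ N := by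
      rw [hNdef, mem_N_iff]
      rw [show (((x : G₁ × G₂).1, (1 : G₂)) : G₁ × G₂) = (x : G₁ × G₂) by
        ext <;> simp [hx2]]
      exact x.2
    show (QuotientGroup.mk' N) ((x : G₁ × G₂)).1 = 1
    exact (QuotientGroup.eq_one_iff _).mpr hx1
  let φ : G₂ →* (G₁ ⧸ N) := f.liftOfSurjective hfs ⟨g, hker⟩
  have hφf : ∀ x : ↥H, φ (f x) = g x := fun x =>
    f.liftOfRightInverse_comp_apply _ _ ⟨g, hker⟩ x
  have hφs : Function.Surjective φ := by
    intro q
    obtain ⟨a, rfl⟩ := QuotientGroup.mk'_surjective N q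
    obtain ⟨b, hab⟩ := fst_surj H h₁ a
    exact ⟨b, hφf ⟨(a, b), hab⟩⟩
  have hkerφ : IsOpen ((φ.ker : Subgroup G₂) : Set G₂) := by
    refine Subgroup.isOpen_mono ?_ hN₂open
    intro b hb
    show φ b = 1
    have hfb : f ⟨((1 : G₁), b), hb⟩ = b := rfl
    rw [← hfb, hφf]
    show (QuotientGroup.mk' N) (1 : G₁) = 1
    simp
  have hφc : Continuous φ := by
    rw [continuous_discrete_rng]
    intro q
    rcases em (∃ b, φ b = q) with ⟨b, rfl⟩ | hempty
    · have heq : φ ⁻¹' {φ b} = (fun x => b⁻¹ * x) ⁻¹' ((φ.ker : Subgroup G₂) : Set G₂) := by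
        ext x
        simp only [Set.mem_preimage, Set.mem_singleton_iff, SetLike.mem_coe,
          MonoidHom.mem_ker, map_mul, map_inv, inv_mul_eq_one]
        exact ⟨fun h => h.symm, fun h => h.symm⟩
      rw [heq]
      exact hkerφ.preimage (continuous_mul_left b⁻¹)
    · have heq : φ ⁻¹' {q} = ∅ := by
        ext x
        simp only [Set.mem_preimage, Set.mem_singleton_iff, Set.mem_empty_iff_false,
          iff_false]
        exact fun h => hempty ⟨x, h⟩
      rw [heq]
      exact isOpen_empty
  let f₂ : G₂ →* S := e.symm.toMonoidHom.comp φ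
  have hcomm : ∀ a b : S, a * b = b * a := by
    by_contra hna
    exact hdisj S hSimpS hna
      ⟨⟨f₁, hf₁c, hf₁s⟩,
       ⟨f₂, by
          have h : Continuous ((e.symm : (G₁ ⧸ N) → S) ∘ φ) :=
            Continuous.comp continuous_of_discreteTopology hφc
          exact h,
        e.symm.surjective.comp hφs⟩⟩
  have hQcomm : ∀ x y : G₁ ⧸ N, x * y = y * x := by
    intro x y
    have h := congrArg e (hcomm (e.symm x) (e.symm y))
    simpa [map_mul] using h
  rw [commutator_def, Subgroup.commutator_le]
  intro a _ b _
  have h1 : (QuotientGroup.mk' N) ⁅a, b⁆ = 1 := by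
    rw [map_commutatorElement]
    exact commutatorElement_eq_one_iff_commute.mpr (hQcomm _ _)
  exact (QuotientGroup.eq_one_iff _).mp h1

/-- If `H` is a maximal closed subgroup of `G₁ × G₂` surjecting onto both factors, and
`G₁`, `G₂` have no common finite nonabelian simple continuous quotient, then `H` contains
the closed commutator subgroup of `G₁ × G₂`. -/
theorem closed_commutator_le_of_maximal_closed
    {G₁ G₂ : Type*} [Group G₁] [TopologicalSpace G₁] [IsTopologicalGroup G₁]
    [CompactSpace G₁] [T2Space G₁] [TotallyDisconnectedSpace G₁]
    [Group G₂] [TopologicalSpace G₂] [IsTopologicalGroup G₂]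
    [CompactSpace G₂] [T2Space G₂] [TotallyDisconnectedSpace G₂]
    (H : Subgroup (G₁ × G₂)) (hmax : IsMaximalClosedSubgroup H)
    (h₁ : Subgroup.map (MonoidHom.fst G₁ G₂) H = ⊤)
    (h₂ : Subgroup.map (MonoidHom.snd G₁ G₂) H = ⊤)
    (hdisj : ∀ (S : Type) [Group S] [Finite S] [TopologicalSpace S] [DiscreteTopology S],
      IsSimpleGroup S → (¬ ∀ a b : S, a * b = b * a) →
      ¬ ((∃ f : G₁ →* S, Continuous f ∧ Function.Surjective f) ∧
         (∃ f : G₂ →* S, Continuous f ∧ Function.Surjective f))) :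
    (commutator (G₁ × G₂)).topologicalClosure ≤ H := by
  classical
  set e : (G₂ × G₁) ≃* (G₁ × G₂) := (MulEquiv.prodComm : (G₂ × G₁) ≃* (G₁ × G₂)) with hedef
  set H' : Subgroup (G₂ × G₁) := H.comap e.toMonoidHom with hH'def
  have hecont : Continuous (⇑e.toMonoidHom) := continuous_snd.prodMk continuous_fst
  have hescont : Continuous (⇑e.symm.toMonoidHom) := continuous_snd.prodMk continuous_fst
  have hmax' : IsMaximalClosedSubgroup H' := by
    refine ⟨?_, ?_, ?_⟩
    · rw [hH'def, Subgroup.coe_comap]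
      exact hmax.1.preimage hecont
    · intro h
      apply hmax.2.1
      rw [Subgroup.eq_top_iff']
      intro x
      have hx : e.symm x ∈ H' := by rw [h]; trivial
      rw [hH'def, Subgroup.mem_comap] at hx
      simpa using hx
    · intro K' hK'c hK't hH'K'
      set K : Subgroup (G₁ × G₂) := K'.comap e.symm.toMonoidHom with hKdef
      have hKc : IsClosed (K : Set (G₁ × G₂)) := by
        rw [hKdef, Subgroup.coe_comap]
        exact hK'c.preimage hescont
      have hKt : K ≠ ⊤ := by
        intro h
        apply hK't
        rw [Subgroup.eq_top_iff']
        intro y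
        have hy : e y ∈ K := by rw [h]; trivial
        rw [hKdef, Subgroup.mem_comap] at hy
        simpa using hy
      have hHK : H ≤ K := by
        intro x hx
        rw [hKdef, Subgroup.mem_comap]
        apply hH'K'
        rw [hH'def, Subgroup.mem_comap]
        simpa using hx
      have hK := hmax.2.2 K hKc hKt hHK
      ext y
      rw [hH'def, Subgroup.mem_comap, ← hK, hKdef, Subgroup.mem_comap]
      simp
  have h₁' : Subgroup.map (MonoidHom.fst G₂ G₁) H' = ⊤ := by
    rw [Subgroup.eq_top_iff']
    intro b
    obtain ⟨a, hab⟩ := ClosedCommAux.snd_surj H h₂ b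
    exact ⟨((b, a) : G₂ × G₁), Subgroup.mem_comap.mpr (by simpa [hedef] using hab), rfl⟩
  have h₂' : Subgroup.map (MonoidHom.snd G₂ G₁) H' = ⊤ := by
    rw [Subgroup.eq_top_iff']
    intro a
    obtain ⟨b, hab⟩ := ClosedCommAux.fst_surj H h₁ a
    exact ⟨((b, a) : G₂ × G₁), Subgroup.mem_comap.mpr (by simpa [hedef] using hab), rfl⟩
  have hswap₁ : H'.comap (MonoidHom.inl G₂ G₁) = H.comap (MonoidHom.inr G₁ G₂) := by
    ext b
    simp [hH'def, Subgroup.mem_comap, hedef, MulEquiv.coe_prodComm]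
  have hswap₂ : H'.comap (MonoidHom.inr G₂ G₁) = H.comap (MonoidHom.inl G₁ G₂) := by
    ext a
    simp [hH'def, Subgroup.mem_comap, hedef, MulEquiv.coe_prodComm]
  have hdisj' : ∀ (S : Type) [Group S] [Finite S] [TopologicalSpace S] [DiscreteTopology S],
      IsSimpleGroup S → (¬ ∀ a b : S, a * b = b * a) →
      ¬ ((∃ f : G₂ →* S, Continuous f ∧ Function.Surjective f) ∧
         (∃ f : G₁ →* S, Continuous f ∧ Function.Surjective f)) := by
    intro S _ _ _ _ hs hna h
    exact hdisj S hs hna ⟨h.2, h.1⟩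
  have hN₂open : IsOpen ((H.comap (MonoidHom.inr G₁ G₂)) : Set G₂) := by
    rw [← hswap₁]
    exact ClosedCommAux.N_open H' hmax' h₁' h₂'
  have hN₂open' : IsOpen ((H'.comap (MonoidHom.inr G₂ G₁)) : Set G₁) := by
    rw [hswap₂]
    exact ClosedCommAux.N_open H hmax h₁ h₂
  have hc₁ : commutator G₁ ≤ H.comap (MonoidHom.inl G₁ G₂) :=
    aux_commutator_le H hmax h₁ h₂ hN₂open hdisj
  have hc₂ : commutator G₂ ≤ H.comap (MonoidHom.inr G₁ G₂) := by
    rw [← hswap₁]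
    exact aux_commutator_le H' hmax' h₁' h₂' hN₂open' hdisj'
  have hcomm : commutator (G₁ × G₂) ≤ H := by
    have hprod : commutator (G₁ × G₂) = (commutator G₁).prod (commutator G₂) := by
      rw [commutator_def, ← Subgroup.top_prod_top, Subgroup.commutator_prod_prod,
        ← commutator_def, ← commutator_def]
    rw [hprod]
    rintro ⟨a, b⟩ ⟨ha, hb⟩
    have ha' : ((a, 1) : G₁ × G₂) ∈ H := hc₁ ha
    have hb' : ((1, b) : G₁ × G₂) ∈ H := hc₂ hb
    have := H.mul_mem ha' hb'
    simpa using this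
  exact Subgroup.topologicalClosure_minimal _ hcomm hmax.1
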